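/- Let $q \ge 1$, $\theta \in [0,\pi]$, and let $v, v_* \in \mathbb{R}^3$, $\sigma \in S^2$ with $v' = \frac{v+v_*}{2} + \frac{|v-v_*|}{2}\sigma$ and $\cos\theta = \frac{(v-v_*)}{|v-v_*|}\cdot\sigma$ (assuming $v \ne v_*$). Then there is a constant $C_q$ depending only on $q$ such that $\left| \langle v' \rangle^q - \langle v \rangle^q \right| \le C_q \sin(\theta/2) \, \langle v \rangle^q \langle v_* \rangle^q$, where $\langle u \rangle = \sqrt{1+|u|^2}$. -/

import Mathlib

set_option maxHeartbeats 1000000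

open Real

/-- Mean value estimate for `x ^ q` on `[1, M]`. -/
lemma rpow_abs_sub_le {q M a b : ℝ} (hq : 1 ≤ q) (ha : a ∈ Set.Icc 1 M)
    (hb : b ∈ Set.Icc 1 M) :
    |a ^ q - b ^ q| ≤ q * M ^ (q - 1) * |a - b| := by
  have hM : (1 : ℝ) ≤ M := le_trans ha.1 ha.2
  have key := Convex.norm_image_sub_le_of_norm_hasDerivWithin_le
    (f := fun x : ℝ => x ^ q) (f' := fun x : ℝ => q * x ^ (q - 1))
    (s := Set.Icc (1 : ℝ) M) (C := q * M ^ (q - 1))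
    (fun x hx => (Real.hasDerivAt_rpow_const (p := q)
      (Or.inl (ne_of_gt (lt_of_lt_of_le zero_lt_one hx.1)))).hasDerivWithinAt)
    (fun x hx => by
      have hx0 : (0 : ℝ) < x := lt_of_lt_of_le zero_lt_one hx.1
      have hxM : x ^ (q - 1) ≤ M ^ (q - 1) :=
        Real.rpow_le_rpow (le_of_lt hx0) hx.2 (by linarith)
      have hxp : (0 : ℝ) ≤ x ^ (q - 1) := le_of_lt (Real.rpow_pos_of_pos hx0 _)
      rw [Real.norm_eq_abs, abs_of_nonneg (by positivity)]
      exact mul_le_mul_of_nonneg_left hxM (by linarith))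
    (convex_Icc 1 M) hb ha
  simpa [Real.norm_eq_abs] using key


/-- `x ↦ √(1+x²)` is 1-Lipschitz. -/
lemma sqrt_one_add_sq_lipschitz {a b d : ℝ} (ha : 0 ≤ a) (hb : 0 ≤ b)
    (h : |a - b| ≤ d) :
    |Real.sqrt (1 + a ^ 2) - Real.sqrt (1 + b ^ 2)| ≤ d := by
  set A : ℝ := Real.sqrt (1 + a ^ 2) with hA
  set B : ℝ := Real.sqrt (1 + b ^ 2) with hB
  have hAsq : A ^ 2 = 1 + a ^ 2 := Real.sq_sqrt (by positivity)
  have hBsq : B ^ 2 = 1 + b ^ 2 := Real.sq_sqrt (by positivity)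
  have hA0 : 0 < A := Real.sqrt_pos.2 (by positivity)
  have hB0 : 0 < B := Real.sqrt_pos.2 (by positivity)
  have haA : a ≤ A := by nlinarith
  have hbB : b ≤ B := by nlinarith
  have hd0 : 0 ≤ d := le_trans (abs_nonneg _) h
  rw [abs_le] at h ⊢
  constructor
  · nlinarith [mul_le_mul_of_nonneg_right (by linarith [h.1] : b - a ≤ d)
      (by linarith : (0:ℝ) ≤ a + b), mul_le_mul_of_nonneg_left
      (by linarith : a + b ≤ A + B) hd0]
  · nlinarith [mul_le_mul_of_nonneg_right (h.2 : a - b ≤ d)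
      (by linarith : (0:ℝ) ≤ a + b), mul_le_mul_of_nonneg_left
      (by linarith : a + b ≤ A + B) hd0]

/-- Weight-difference estimate for post-collisional velocities: there is a
constant `C_q` depending only on `q ≥ 1` such that
`|⟨v'⟩^q - ⟨v⟩^q| ≤ C_q sin(θ/2) ⟨v⟩^q ⟨v_*⟩^q`. -/
theorem weight_difference_estimate (q : ℝ) (hq : 1 ≤ q) :
    ∃ C : ℝ, 0 < C ∧
      ∀ (v vs σ : EuclideanSpace ℝ (Fin 3)) (θ : ℝ),
        v ≠ vs → ‖σ‖ = 1 → 0 ≤ θ → θ ≤ Real.pi →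
        Real.cos θ = inner ℝ ((‖v - vs‖⁻¹ : ℝ) • (v - vs)) σ →
        ∀ v' : EuclideanSpace ℝ (Fin 3),
          v' = (1/2 : ℝ) • (v + vs) + (‖v - vs‖ / 2) • σ →
          |Real.sqrt (1 + ‖v'‖ ^ 2) ^ q - Real.sqrt (1 + ‖v‖ ^ 2) ^ q|
            ≤ C * Real.sin (θ / 2) *
              (Real.sqrt (1 + ‖v‖ ^ 2) ^ q * Real.sqrt (1 + ‖vs‖ ^ 2) ^ q) := by
  refine ⟨q, lt_of_lt_of_le zero_lt_one hq, ?_⟩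
  intro v vs σ θ hne hσ hθ0 hθπ hcos v' hv'
  set r : ℝ := ‖v - vs‖ with hr
  have hr0 : 0 < r := by
    simpa [hr] using norm_pos_iff.2 (sub_ne_zero.2 hne)
  -- inner product identity
  have hinner : (inner ℝ (v - vs) σ : ℝ) = r * Real.cos θ := by
    rw [hcos, real_inner_smul_left]
    field_simp
  -- sin nonneg
  have hsin : 0 ≤ Real.sin (θ / 2) :=
    Real.sin_nonneg_of_nonneg_of_le_pi (by linarith) (by linarith [Real.pi_pos])
  -- ‖v' - v‖ = r * sin (θ/2)
  have hdiff : v' - v = (1/2 : ℝ) • (vs - v) + (r / 2) • σ := by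
    rw [hv']; module
  have hnormsq : ‖v' - v‖ ^ 2 = (r * Real.sin (θ / 2)) ^ 2 := by
    rw [hdiff, norm_add_sq_real, real_inner_smul_left, real_inner_smul_right,
      norm_smul, norm_smul]
    have h1 : (inner ℝ (vs - v) σ : ℝ) = -(r * Real.cos θ) := by
      rw [← hinner, ← inner_neg_left]; congr 1; abel
    have h2 : ‖vs - v‖ = r := by rw [hr, norm_sub_rev]
    have h3 : Real.sin (θ / 2) ^ 2 = (1 - Real.cos θ) / 2 := by
      rw [Real.sin_half_eq_sqrt hθ0 (by linarith [Real.pi_pos]),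
        Real.sq_sqrt (by nlinarith [Real.cos_le_one θ])]
    rw [h1, h2, hσ]
    simp [Real.norm_eq_abs, abs_of_pos hr0, abs_of_nonneg (by linarith : (0:ℝ) ≤ (1:ℝ)/2),
      abs_of_nonneg (by linarith : (0:ℝ) ≤ r/2)]
    nlinarith [h3]
  have hnorm : ‖v' - v‖ = r * Real.sin (θ / 2) := by
    have h1 : 0 ≤ ‖v' - v‖ := norm_nonneg _
    have h2 : 0 ≤ r * Real.sin (θ / 2) := mul_nonneg (le_of_lt hr0) hsin
    nlinarith [hnormsq]
  -- weights
  set A : ℝ := Real.sqrt (1 + ‖v‖ ^ 2) with hA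
  set B : ℝ := Real.sqrt (1 + ‖vs‖ ^ 2) with hB
  set A' : ℝ := Real.sqrt (1 + ‖v'‖ ^ 2) with hA'
  have hA1 : 1 ≤ A := by
    have h := Real.sqrt_le_sqrt (le_add_of_nonneg_right (sq_nonneg ‖v‖) : (1:ℝ) ≤ 1 + ‖v‖ ^ 2)
    rwa [Real.sqrt_one] at h
  have hB1 : 1 ≤ B := by
    have h := Real.sqrt_le_sqrt (le_add_of_nonneg_right (sq_nonneg ‖vs‖) : (1:ℝ) ≤ 1 + ‖vs‖ ^ 2)
    rwa [Real.sqrt_one] at h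
  have hA'1 : 1 ≤ A' := by
    have h := Real.sqrt_le_sqrt (le_add_of_nonneg_right (sq_nonneg ‖v'‖) : (1:ℝ) ≤ 1 + ‖v'‖ ^ 2)
    rwa [Real.sqrt_one] at h
  have hAsq : A ^ 2 = 1 + ‖v‖ ^ 2 := Real.sq_sqrt (by positivity)
  have hBsq : B ^ 2 = 1 + ‖vs‖ ^ 2 := Real.sq_sqrt (by positivity)
  have hA'sq : A' ^ 2 = 1 + ‖v'‖ ^ 2 := Real.sq_sqrt (by positivity)
  have hvA : ‖v‖ ≤ A := by nlinarith [hAsq, hA1, norm_nonneg v]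
  have hv'A : ‖v'‖ ≤ A' := by nlinarith [hA'sq, hA'1, norm_nonneg v']
  -- ‖v'‖² ≤ ‖v‖² + ‖vs‖²
  have hpar : ‖v + vs‖ ^ 2 + r ^ 2 = 2 * (‖v‖ ^ 2 + ‖vs‖ ^ 2) := by
    rw [hr, norm_add_sq_real, norm_sub_sq_real]; ring
  have e1 : ‖(1/2 : ℝ) • (v + vs)‖ = ‖v + vs‖ / 2 := by
    rw [norm_smul, Real.norm_eq_abs, abs_of_nonneg (by norm_num : (0:ℝ) ≤ 1/2)]; ring
  have e2 : ‖(r / 2 : ℝ) • σ‖ = r / 2 := by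
    rw [norm_smul, Real.norm_eq_abs, hσ, abs_of_nonneg (by positivity : (0:ℝ) ≤ r/2)]; ring
  have hv'le : ‖v'‖ ≤ ‖v + vs‖ / 2 + r / 2 := by
    calc ‖v'‖ = ‖(1/2 : ℝ) • (v + vs) + (r / 2 : ℝ) • σ‖ := by rw [hv']
      _ ≤ ‖(1/2 : ℝ) • (v + vs)‖ + ‖(r / 2 : ℝ) • σ‖ := norm_add_le _ _
      _ = ‖v + vs‖ / 2 + r / 2 := by rw [e1, e2]
  have hv'sq : ‖v'‖ ^ 2 ≤ ‖v‖ ^ 2 + ‖vs‖ ^ 2 := by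
    nlinarith [norm_nonneg v', norm_nonneg (v + vs), hr0, sq_nonneg (‖v + vs‖ - r)]
  -- A' ≤ A * B  and A ≤ A * B  and r ≤ A * B
  have hAB1 : 1 ≤ A * B := by nlinarith
  have hA'AB : A' ≤ A * B := by
    nlinarith [hA'sq, hAsq, hBsq, norm_nonneg v, norm_nonneg vs]
  have hAAB : A ≤ A * B := le_mul_of_one_le_right (by linarith) hB1
  have hrAB : r ≤ A * B := by
    have h1 : r ≤ ‖v‖ + ‖vs‖ := norm_sub_le v vs
    nlinarith [hAsq, hBsq, norm_nonneg v, norm_nonneg vs, sq_nonneg (‖v‖ * ‖vs‖ - 1)]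
  -- Lipschitz: |A' - A| ≤ ‖v' - v‖
  have hlip : |A' - A| ≤ ‖v' - v‖ :=
    sqrt_one_add_sq_lipschitz (norm_nonneg v') (norm_nonneg v) (abs_norm_sub_norm_le v' v)
  -- apply MVT lemma with M = A * B
  have hmvt := rpow_abs_sub_le (M := A * B) hq ⟨hA'1, hA'AB⟩ ⟨hA1, hAAB⟩
  have hABpos : 0 < A * B := lt_of_lt_of_le zero_lt_one hAB1
  have hABq : (A * B) ^ (q - 1) * (A * B) = (A * B) ^ q := by
    nth_rw 2 [show A * B = (A * B) ^ (1 : ℝ) by rw [Real.rpow_one]]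
    rw [← Real.rpow_add hABpos]; ring_nf
  have hABmul : (A * B) ^ q = A ^ q * B ^ q :=
    Real.mul_rpow (by linarith) (by linarith)
  have hpow_pos : (0 : ℝ) < (A * B) ^ (q - 1) := Real.rpow_pos_of_pos hABpos _
  calc |A' ^ q - A ^ q| ≤ q * (A * B) ^ (q - 1) * |A' - A| := hmvt
    _ ≤ q * (A * B) ^ (q - 1) * (r * Real.sin (θ / 2)) := by
        refine mul_le_mul_of_nonneg_left ?_ (by positivity)
        rw [← hnorm]; exact hlip
    _ ≤ q * (A * B) ^ (q - 1) * ((A * B) * Real.sin (θ / 2)) := by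
        refine mul_le_mul_of_nonneg_left ?_ (by positivity)
        exact mul_le_mul_of_nonneg_right hrAB hsin
    _ = q * Real.sin (θ / 2) * ((A * B) ^ (q - 1) * (A * B)) := by ring
    _ = q * Real.sin (θ / 2) * (A ^ q * B ^ q) := by rw [hABq, hABmul]
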